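/- Let S = {a₁,a₂} × {b₁,b₂} be the 2×2 rectangular band and F a field. Then J_L ∩ J_R = F·((a₁,b₁) − (a₁,b₂) − (a₂,b₁) + (a₂,b₂)) is the unique minimal nonzero two-sided ideal of F[S]: every nonzero ideal of F[S] contains it. -/

import Mathlib

inductive L2 : Type | a1 | a2
deriving DecidableEq

instance : Fintype L2 := ⟨{L2.a1, L2.a2}, fun x => by cases x <;> simp⟩

instance : Semigroup L2 where
  mul x _ := x
  mul_assoc _ _ _ := rfl

inductive R2 : Type | b1 | b2
deriving DecidableEq

instance : Fintype R2 := ⟨{R2.b1, R2.b2}, fun x => by cases x <;> simp⟩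

instance : Semigroup R2 where
  mul _ y := y
  mul_assoc _ _ _ := rfl

abbrev RB : Type := L2 × R2

def IsTwoSidedIdeal {F A : Type*} [Field F] [NonUnitalNonAssocSemiring A]
    [Module F A] (J : Submodule F A) : Prop :=
  ∀ a x : A, x ∈ J → a * x ∈ J ∧ x * a ∈ J

variable (F : Type*) [Field F]

/-- The sum-of-coefficients (augmentation) linear map on `F[S]`. -/
noncomputable def coeffSum : MonoidAlgebra F RB →ₗ[F] F where
  toFun x := ∑ s : RB, x.coeff s
  map_add' x y := by
    simp only [show ∀ s, (x + y).coeff s = x.coeff s + y.coeff s from fun _ => rfl, Finset.sum_add_distrib]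
  map_smul' c x := by
    simp only [show ∀ s, (c • x).coeff s = c * x.coeff s from fun _ => rfl, Finset.mul_sum,
      RingHom.id_apply, smul_eq_mul]

/-- `J_L`: the kernel of the map `F[S] → F[L]` induced by the projection. -/
noncomputable def JL : Submodule F (MonoidAlgebra F RB) :=
  LinearMap.ker (Finsupp.lmapDomain F F (Prod.fst : RB → L2) ∘ₗ
    (MonoidAlgebra.coeffLinearEquiv F).toLinearMap)

/-- `J_R`: the kernel of the map `F[S] → F[R]` induced by the projection. -/
noncomputable def JR : Submodule F (MonoidAlgebra F RB) :=
  LinearMap.ker (Finsupp.lmapDomain F F (Prod.snd : RB → R2) ∘ₗ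
    (MonoidAlgebra.coeffLinearEquiv F).toLinearMap)

/-- The element `C = (a₁,b₁) − (a₁,b₂) − (a₂,b₁) + (a₂,b₂)`. -/
noncomputable def Celt : MonoidAlgebra F RB :=
  MonoidAlgebra.single (L2.a1, R2.b1) 1 - MonoidAlgebra.single (L2.a1, R2.b2) 1
    - MonoidAlgebra.single (L2.a2, R2.b1) 1 + MonoidAlgebra.single (L2.a2, R2.b2) 1

open MonoidAlgebra L2 R2

section Aux
variable {F}


@[simp] lemma L2.mul_def (x y : L2) : x * y = x := rfl
@[simp] lemma R2.mul_def (x y : R2) : x * y = y := rfl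



@[simp] lemma MA.add_apply (x y : MonoidAlgebra F RB) (s : RB) : (x + y).coeff s = x.coeff s + y.coeff s := rfl
@[simp] lemma MA.sub_apply (x y : MonoidAlgebra F RB) (s : RB) : (x - y).coeff s = x.coeff s - y.coeff s := rfl
@[simp] lemma MA.smul_apply (c : F) (x : MonoidAlgebra F RB) (s : RB) : (c • x).coeff s = c * x.coeff s := rfl
@[simp] lemma MA.zero_apply (s : RB) : (0 : MonoidAlgebra F RB).coeff s = 0 := rfl

lemma decomp (x : MonoidAlgebra F RB) :
    x = single (a1,b1) (x.coeff (a1,b1)) + single (a1,b2) (x.coeff (a1,b2))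
      + single (a2,b1) (x.coeff (a2,b1)) + single (a2,b2) (x.coeff (a2,b2)) := by
  ext ⟨i,j⟩
  cases i <;> cases j <;>
    simp [MonoidAlgebra.single_apply]

lemma mul_single_eq (x : MonoidAlgebra F RB) (k : L2) (j : R2) :
    x * single (k, j) (1:F)
      = single (a1, j) (x.coeff (a1,b1) + x.coeff (a1,b2)) + single (a2, j) (x.coeff (a2,b1) + x.coeff (a2,b2)) := by
  conv_lhs => rw [decomp x]
  simp only [add_mul, MonoidAlgebra.single_mul_single, Prod.mk_mul_mk, L2.mul_def, R2.mul_def,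
    mul_one, MonoidAlgebra.single_add]
  abel

lemma single_mul_eq (x : MonoidAlgebra F RB) (i : L2) (b : R2) :
    single (i, b) (1:F) * x
      = single (i, b1) (x.coeff (a1,b1) + x.coeff (a2,b1)) + single (i, b2) (x.coeff (a1,b2) + x.coeff (a2,b2)) := by
  conv_lhs => rw [decomp x]
  simp only [mul_add, MonoidAlgebra.single_mul_single, Prod.mk_mul_mk, L2.mul_def, R2.mul_def,
    one_mul, MonoidAlgebra.single_add]
  abel

lemma smul_Celt (t : F) :
    t • Celt F = single (a1,b1) t - single (a1,b2) t - single (a2,b1) t + single (a2,b2) t := by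
  simp [Celt, smul_sub, smul_add, MonoidAlgebra.smul_single]

lemma mem_JL_iff (x : MonoidAlgebra F RB) :
    x ∈ JL F ↔ x.coeff (a1,b1) + x.coeff (a1,b2) = 0 ∧ x.coeff (a2,b1) + x.coeff (a2,b2) = 0 := by
  have h : Finsupp.mapDomain (Prod.fst : RB → L2) x.coeff
      = Finsupp.single a1 (x.coeff (a1,b1) + x.coeff (a1,b2)) + Finsupp.single a2 (x.coeff (a2,b1) + x.coeff (a2,b2)) := by
    conv_lhs => rw [decomp x]
    simp only [MonoidAlgebra.coeff_add, MonoidAlgebra.coeff_single, Finsupp.mapDomain_add, Finsupp.mapDomain_single, Finsupp.single_add]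
    abel
  rw [JL, LinearMap.mem_ker]
  change Finsupp.mapDomain (Prod.fst : RB → L2) x.coeff = 0 ↔ _
  rw [h]
  constructor
  · intro h0
    constructor
    · have h1 := DFunLike.congr_fun h0 a1
      simpa [Finsupp.single_apply] using h1
    · have h1 := DFunLike.congr_fun h0 a2
      simpa [Finsupp.single_apply] using h1
  · rintro ⟨p, q⟩
    rw [p, q]
    simp

lemma mem_JR_iff (x : MonoidAlgebra F RB) :
    x ∈ JR F ↔ x.coeff (a1,b1) + x.coeff (a2,b1) = 0 ∧ x.coeff (a1,b2) + x.coeff (a2,b2) = 0 := by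
  have h : Finsupp.mapDomain (Prod.snd : RB → R2) x.coeff
      = Finsupp.single b1 (x.coeff (a1,b1) + x.coeff (a2,b1)) + Finsupp.single b2 (x.coeff (a1,b2) + x.coeff (a2,b2)) := by
    conv_lhs => rw [decomp x]
    simp only [MonoidAlgebra.coeff_add, MonoidAlgebra.coeff_single, Finsupp.mapDomain_add, Finsupp.mapDomain_single, Finsupp.single_add]
    abel
  rw [JR, LinearMap.mem_ker]
  change Finsupp.mapDomain (Prod.snd : RB → R2) x.coeff = 0 ↔ _
  rw [h]
  constructor
  · intro h0
    constructor
    · have h1 := DFunLike.congr_fun h0 b1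
      simpa [Finsupp.single_apply] using h1
    · have h1 := DFunLike.congr_fun h0 b2
      simpa [Finsupp.single_apply] using h1
  · rintro ⟨p, q⟩
    rw [p, q]
    simp

@[simp] lemma Celt_apply (i : L2) (j : R2) :
    (Celt F).coeff (i, j) = (if i = a1 then 1 else -1) * (if j = b1 then 1 else -1) := by
  cases i <;> cases j <;> simp [Celt, Finsupp.single_apply]

lemma sandwich (x : MonoidAlgebra F RB) (i : L2) (b : R2) (k : L2) (j : R2) :
    (single (i,b) (1:F) * x) * single (k,j) (1:F)
      = single (i,j) (x.coeff (a1,b1) + x.coeff (a1,b2) + x.coeff (a2,b1) + x.coeff (a2,b2)) := by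
  rw [single_mul_eq, add_mul, MonoidAlgebra.single_mul_single, MonoidAlgebra.single_mul_single]
  simp only [Prod.mk_mul_mk, L2.mul_def, R2.mul_def, mul_one]
  rw [← MonoidAlgebra.single_add]
  congr 1
  ring

lemma single_neg' (a : RB) (c : F) : (single a (-c) : MonoidAlgebra F RB) = - single a c :=
  MonoidAlgebra.single_neg a c

end Aux

/-- `J_L ∩ J_R = F·C` is the unique minimal nonzero two-sided ideal of the
semigroup algebra of the 2x2 rectangular band: every nonzero two-sided ideal
contains it. -/
theorem JL_inf_JR_unique_minimal :
    JL F ⊓ JR F = Submodule.span F {Celt F} ∧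
    ∀ J : Submodule F (MonoidAlgebra F RB),
      IsTwoSidedIdeal J → J ≠ ⊥ → Submodule.span F {Celt F} ≤ J := by
  constructor
  · apply le_antisymm
    · intro x hx
      obtain ⟨hL, hR⟩ := Submodule.mem_inf.mp hx
      rw [mem_JL_iff] at hL
      rw [mem_JR_iff] at hR
      obtain ⟨hL1, hL2⟩ := hL
      obtain ⟨hR1, hR2⟩ := hR
      rw [Submodule.mem_span_singleton]
      refine ⟨x.coeff (a1,b1), ?_⟩
      rw [smul_Celt]
      conv_rhs => rw [decomp x]
      rw [show x.coeff (a1,b2) = -x.coeff (a1,b1) from by linear_combination hL1,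
        show x.coeff (a2,b1) = -x.coeff (a1,b1) from by linear_combination hR1,
        show x.coeff (a2,b2) = x.coeff (a1,b1) from by linear_combination hL2 - hR1]
      simp only [single_neg']
      abel
    · rw [Submodule.span_le, Set.singleton_subset_iff, SetLike.mem_coe]
      refine Submodule.mem_inf.mpr ⟨(mem_JL_iff _).2 ⟨?_, ?_⟩, (mem_JR_iff _).2 ⟨?_, ?_⟩⟩ <;>
        · simp
  · intro J hJ hne
    rw [Submodule.span_le, Set.singleton_subset_iff, SetLike.mem_coe]
    obtain ⟨x, hxJ, hx0⟩ := (Submodule.ne_bot_iff J).1 hne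
    by_cases h1 : x.coeff (a1,b1) + x.coeff (a1,b2) + x.coeff (a2,b1) + x.coeff (a2,b2) = 0
    · by_cases h2 : x.coeff (a1,b1) + x.coeff (a1,b2) = 0
      · by_cases h3 : x.coeff (a1,b1) + x.coeff (a2,b1) = 0
        · -- x ∈ JL ⊓ JR, x = x11 • C with x11 ≠ 0
          have hx11 : x.coeff (a1,b1) ≠ 0 := by
            intro h
            apply hx0
            rw [decomp x, h, show x.coeff (a1,b2) = 0 from by linear_combination h2 - h,
              show x.coeff (a2,b1) = 0 from by linear_combination h3 - h,
              show x.coeff (a2,b2) = 0 from by linear_combination h1 - h2 - h3 + h]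
            simp
          have key : x = x.coeff (a1,b1) • Celt F := by
            rw [smul_Celt]
            conv_lhs => rw [decomp x]
            rw [show x.coeff (a1,b2) = -x.coeff (a1,b1) from by linear_combination h2,
              show x.coeff (a2,b1) = -x.coeff (a1,b1) from by linear_combination h3,
              show x.coeff (a2,b2) = x.coeff (a1,b1) from by linear_combination h1 - h2 - h3]
            simp only [single_neg']
            abel
          have hC : Celt F = (x.coeff (a1,b1))⁻¹ • (x.coeff (a1,b1) • Celt F) := by
            rw [smul_smul, inv_mul_cancel₀ hx11, one_smul]
          rw [hC, ← key]
          exact Submodule.smul_mem _ _ hxJ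
        · -- column sum nonzero
          have key : single (a1,b1) (1:F) * x - single (a2,b1) (1:F) * x
              = (x.coeff (a1,b1) + x.coeff (a2,b1)) • Celt F := by
            rw [single_mul_eq, single_mul_eq, smul_Celt,
              show x.coeff (a1,b2) + x.coeff (a2,b2) = -(x.coeff (a1,b1) + x.coeff (a2,b1)) from by linear_combination h1]
            simp only [single_neg']
            abel
          have hm : single (a1,b1) (1:F) * x - single (a2,b1) (1:F) * x ∈ J :=
            Submodule.sub_mem _ (hJ _ _ hxJ).1 (hJ _ _ hxJ).1
          have hC : Celt F = (x.coeff (a1,b1) + x.coeff (a2,b1))⁻¹ •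
              (single (a1,b1) (1:F) * x - single (a2,b1) (1:F) * x) := by
            rw [key, smul_smul, inv_mul_cancel₀ h3, one_smul]
          rw [hC]
          exact Submodule.smul_mem _ _ hm
      · -- row sum nonzero
        have key : x * single (a1,b1) (1:F) - x * single (a1,b2) (1:F)
            = (x.coeff (a1,b1) + x.coeff (a1,b2)) • Celt F := by
          rw [mul_single_eq, mul_single_eq, smul_Celt,
            show x.coeff (a2,b1) + x.coeff (a2,b2) = -(x.coeff (a1,b1) + x.coeff (a1,b2)) from by linear_combination h1]
          simp only [single_neg']
          abel
        have hm : x * single (a1,b1) (1:F) - x * single (a1,b2) (1:F) ∈ J :=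
          Submodule.sub_mem _ (hJ _ _ hxJ).2 (hJ _ _ hxJ).2
        have hC : Celt F = (x.coeff (a1,b1) + x.coeff (a1,b2))⁻¹ •
            (x * single (a1,b1) (1:F) - x * single (a1,b2) (1:F)) := by
          rw [key, smul_smul, inv_mul_cancel₀ h2, one_smul]
        rw [hC]
        exact Submodule.smul_mem _ _ hm
    · -- total sum nonzero
      have m : ∀ (i : L2) (j : R2), single (i,j)
          (x.coeff (a1,b1) + x.coeff (a1,b2) + x.coeff (a2,b1) + x.coeff (a2,b2)) ∈ J := by
        intro i j
        have h4 : (single (i,b1) (1:F) * x) * single (a1,j) (1:F) ∈ J :=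
          (hJ _ _ (hJ _ _ hxJ).1).2
        rwa [sandwich] at h4
      have key : (x.coeff (a1,b1) + x.coeff (a1,b2) + x.coeff (a2,b1) + x.coeff (a2,b2)) • Celt F
          = single (a1,b1) (x.coeff (a1,b1) + x.coeff (a1,b2) + x.coeff (a2,b1) + x.coeff (a2,b2))
            - single (a1,b2) (x.coeff (a1,b1) + x.coeff (a1,b2) + x.coeff (a2,b1) + x.coeff (a2,b2))
            - single (a2,b1) (x.coeff (a1,b1) + x.coeff (a1,b2) + x.coeff (a2,b1) + x.coeff (a2,b2))
            + single (a2,b2) (x.coeff (a1,b1) + x.coeff (a1,b2) + x.coeff (a2,b1) + x.coeff (a2,b2)) := smul_Celt _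
      have hm : (x.coeff (a1,b1) + x.coeff (a1,b2) + x.coeff (a2,b1) + x.coeff (a2,b2)) • Celt F ∈ J := by
        rw [key]
        exact Submodule.add_mem _ (Submodule.sub_mem _
          (Submodule.sub_mem _ (m a1 b1) (m a1 b2)) (m a2 b1)) (m a2 b2)
      have hC : Celt F = (x.coeff (a1,b1) + x.coeff (a1,b2) + x.coeff (a2,b1) + x.coeff (a2,b2))⁻¹ •
          ((x.coeff (a1,b1) + x.coeff (a1,b2) + x.coeff (a2,b1) + x.coeff (a2,b2)) • Celt F) := by
        rw [smul_smul, inv_mul_cancel₀ h1, one_smul]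
      rw [hC]
      exact Submodule.smul_mem _ _ hm
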